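/- arXiv:1908.10986 — 3 statements merged into one kernel-verified Lean document; each statement's English description precedes it below -/
import Mathlib

section
/- In the lattice ℤ^8 with basis e₀,…,e₇, intersection form diag(1,−1,…,−1) and K = −3e₀ + e₁ + ⋯ + e₇: every vector D with D·K = 0 and D² = −2 can be written as D = L₁ − L₂ where L₁, L₂ satisfy Lᵢ² = Lᵢ·K = −1 and L₁·L₂ = 0. -/
/-- The intersection form of the blowup of P² at 7 points: diag(1,-1,…,-1). -/
def ip8 (x y : Fin 8 → ℤ) : ℤ :=
  x 0 * y 0 - ∑ i : Fin 7, x i.succ * y i.succ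

/-- The canonical class K = -3e₀ + e₁ + ⋯ + e₇. -/
def Kdp : Fin 8 → ℤ := fun i => if i = 0 then -3 else 1

namespace DP2aux

lemma ip8_comm (x y : Fin 8 → ℤ) : ip8 x y = ip8 y x := by
  simp [ip8, mul_comm]

lemma ip8_add_right (x y z : Fin 8 → ℤ) : ip8 x (y + z) = ip8 x y + ip8 x z := by
  simp [ip8, mul_add, Finset.sum_add_distrib]; ring

lemma ip8_sub_right (x y z : Fin 8 → ℤ) : ip8 x (y - z) = ip8 x y - ip8 x z := by
  simp [ip8, mul_sub, Finset.sum_sub_distrib]; ring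

lemma ip8_add_left (x y z : Fin 8 → ℤ) : ip8 (x + y) z = ip8 x z + ip8 y z := by
  rw [ip8_comm, ip8_add_right, ip8_comm z x, ip8_comm z y]

lemma ip8_sub_left (x y z : Fin 8 → ℤ) : ip8 (x - y) z = ip8 x z - ip8 y z := by
  rw [ip8_comm, ip8_sub_right, ip8_comm z x, ip8_comm z y]

lemma ip8_neg_left (x y : Fin 8 → ℤ) : ip8 (-x) y = -ip8 x y := by
  simp [ip8]; ring

lemma ip8_neg_right (x y : Fin 8 → ℤ) : ip8 x (-y) = -ip8 x y := by
  rw [ip8_comm, ip8_neg_left, ip8_comm]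

def E0 : Fin 8 → ℤ := fun i => if i = 0 then 1 else 0
def Ee (j : Fin 7) : Fin 8 → ℤ := fun i => if i = j.succ then 1 else 0

lemma ip8_E0 (x : Fin 8 → ℤ) : ip8 x E0 = x 0 := by
  simp [ip8, E0, Fin.succ_ne_zero]

lemma ip8_Ee (x : Fin 8 → ℤ) (j : Fin 7) : ip8 x (Ee j) = - x j.succ := by
  simp [ip8, Ee, (Fin.succ_ne_zero j).symm, Fin.succ_inj]

lemma ip8_Kdp (x : Fin 8 → ℤ) : ip8 x Kdp = -3 * x 0 - ∑ i : Fin 7, x i.succ := by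
  simp [ip8, Kdp, Fin.succ_ne_zero]; ring

lemma Ee_line (j : Fin 7) : ip8 (Ee j) (Ee j) = -1 ∧ ip8 (Ee j) Kdp = -1 := by
  constructor
  · rw [ip8_Ee]; simp [Ee]
  · rw [ip8_Kdp]; simp [Ee, (Fin.succ_ne_zero j).symm, Fin.succ_inj]

lemma line2_self (j k : Fin 7) (hjk : j ≠ k) :
    ip8 (E0 - Ee j - Ee k) (E0 - Ee j - Ee k) = -1 := by
  rw [ip8_sub_right, ip8_sub_right, ip8_E0, ip8_Ee, ip8_Ee]
  have h1 : j.succ ≠ k.succ := fun h => hjk (Fin.succ_inj.mp h)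
  simp [E0, Ee, Fin.succ_ne_zero, (Fin.succ_ne_zero j).symm, (Fin.succ_ne_zero k).symm, h1, h1.symm]

lemma line2_Kdp (j k : Fin 7) : ip8 (E0 - Ee j - Ee k) Kdp = -1 := by
  rw [ip8_sub_left, ip8_sub_left, ip8_Kdp, ip8_Kdp, ip8_Kdp]
  simp [E0, Ee, Fin.succ_ne_zero, (Fin.succ_ne_zero j).symm, (Fin.succ_ne_zero k).symm,
    Fin.succ_inj]

lemma line2_D (D : Fin 8 → ℤ) (j k : Fin 7) :
    ip8 D (E0 - Ee j - Ee k) = D 0 + D j.succ + D k.succ := by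
  rw [ip8_sub_right, ip8_sub_right, ip8_E0, ip8_Ee, ip8_Ee]; ring

lemma zero_or_negone (m : Fin 7 → ℤ) (h : ∑ i : Fin 7, (m i ^ 2 + m i) = 0) :
    ∀ i, m i = 0 ∨ m i = -1 := by
  have h' := (Finset.sum_eq_zero_iff_of_nonneg
    (fun i _ => by nlinarith [sq_nonneg (2 * m i + 1)])).mp h
  intro i
  have := h' i (Finset.mem_univ i)
  have h2 : m i * (m i + 1) = 0 := by nlinarith
  rcases mul_eq_zero.mp h2 with h3 | h3
  · exact Or.inl h3
  · exact Or.inr (by omega)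

lemma exists_negone (m : Fin 7 → ℤ) (hm : ∀ i, m i = 0 ∨ m i = -1)
    (hs : ∑ i : Fin 7, m i ≠ 0) : ∃ j, m j = -1 := by
  by_contra h
  push_neg at h
  exact hs (Finset.sum_eq_zero fun i _ => (hm i).resolve_right (h i))

lemma exists_zero (m : Fin 7 → ℤ) (hm : ∀ i, m i = 0 ∨ m i = -1)
    (hs : ∑ i : Fin 7, m i ≠ -7) : ∃ j, m j = 0 := by
  by_contra h
  push_neg at h
  apply hs
  have : ∀ i ∈ Finset.univ, m i = -1 := fun i _ => (hm i).resolve_left (h i)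
  rw [Finset.sum_congr rfl this]
  simp

lemma exists_two_zeros (m : Fin 7 → ℤ) (hm : ∀ i, m i = 0 ∨ m i = -1)
    (hs : ∑ i : Fin 7, m i = -3) : ∃ j k, j ≠ k ∧ m j = 0 ∧ m k = 0 := by
  obtain ⟨j, hj⟩ := exists_zero m hm (by omega)
  have herase : ∑ i ∈ Finset.univ.erase j, m i = -3 := by
    have := Finset.add_sum_erase Finset.univ m (Finset.mem_univ j)
    omega
  have : ∃ k ∈ Finset.univ.erase j, m k = 0 := by
    by_contra h
    push_neg at h
    have hall : ∀ i ∈ Finset.univ.erase j, m i = -1 := fun i hi => (hm i).resolve_left (h i hi)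
    rw [Finset.sum_congr rfl hall, Finset.sum_const,
      Finset.card_erase_of_mem (Finset.mem_univ j)] at herase
    simp at herase
  obtain ⟨k, hk, hk0⟩ := this
  exact ⟨k, j, (Finset.mem_erase.mp hk).1, hk0, hj⟩

lemma exists_line_pos (D : Fin 8 → ℤ) (h0 : 0 ≤ D 0)
    (hDK : ip8 D Kdp = 0) (hDD : ip8 D D = -2) :
    ∃ L, ip8 L L = -1 ∧ ip8 L Kdp = -1 ∧ ip8 D L = 1 := by
  rw [ip8_Kdp] at hDK
  rw [ip8] at hDD
  set m : Fin 7 → ℤ := fun i => D i.succ with hmdef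
  have hDm : ∀ i : Fin 7, D i.succ = m i := fun i => rfl
  simp only [hDm] at hDK hDD
  set d := D 0 with hd
  have hsum : ∑ i : Fin 7, m i = -3 * d := by linarith
  have hsq : ∑ i : Fin 7, m i ^ 2 = d ^ 2 + 2 := by
    have : ∑ i : Fin 7, m i ^ 2 = ∑ i : Fin 7, m i * m i := by
      apply Finset.sum_congr rfl; intro i _; ring
    rw [this]; nlinarith [hDD]
  -- Cauchy–Schwarz bound on d
  have hcs : (∑ i : Fin 7, m i * 1) ^ 2 ≤ (∑ i : Fin 7, m i ^ 2) * ∑ i : Fin 7, (1:ℤ) ^ 2 :=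
    Finset.sum_mul_sq_le_sq_mul_sq _ _ _
  simp only [mul_one, one_pow, Finset.sum_const, Finset.card_univ, Fintype.card_fin,
    smul_eq_mul] at hcs
  rw [hsum, hsq] at hcs
  have hd2 : d ≤ 2 := by simp only [smul_eq_mul, nsmul_eq_mul] at hcs; push_cast at hcs; nlinarith
  have hdcases : d = 0 ∨ d = 1 ∨ d = 2 := by omega
  rcases hdcases with h | h | h
  · -- d = 0 : pick j with m j = -1, take L = Ee j
    rw [h] at hsum hsq
    have hneg : ∃ j, m j < 0 := by
      by_contra hc
      push_neg at hc
      have := (Finset.sum_eq_zero_iff_of_nonneg (fun i _ => hc i)).mp (by simpa using hsum)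
      have : ∑ i : Fin 7, m i ^ 2 = 0 :=
        Finset.sum_eq_zero fun i _ => by rw [this i (Finset.mem_univ i)]; ring
      omega
    obtain ⟨j, hj⟩ := hneg
    have hle : m j ^ 2 ≤ 2 := by
      have h1 : m j ^ 2 ≤ ∑ i : Fin 7, m i ^ 2 :=
        Finset.single_le_sum (fun i _ => sq_nonneg (m i)) (Finset.mem_univ j)
      omega
    have hj1 : m j = -1 := by nlinarith
    refine ⟨Ee j, (Ee_line j).1, (Ee_line j).2, ?_⟩
    rw [ip8_Ee, hDm j, hj1]; ring
  · -- d = 1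
    rw [h] at hsum hsq
    have h01 : ∀ i, m i = 0 ∨ m i = -1 := by
      apply zero_or_negone
      rw [Finset.sum_add_distrib, hsq, hsum]; ring
    obtain ⟨j, k, hjk, hj, hk⟩ := exists_two_zeros m h01 (by omega)
    refine ⟨E0 - Ee j - Ee k, line2_self j k hjk, line2_Kdp j k, ?_⟩
    rw [line2_D, hDm j, hDm k, hj, hk, ← hd, h]; ring
  · -- d = 2
    rw [h] at hsum hsq
    have h01 : ∀ i, m i = 0 ∨ m i = -1 := by
      apply zero_or_negone
      rw [Finset.sum_add_distrib, hsq, hsum]; ring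
    obtain ⟨j, hj⟩ := exists_negone m h01 (by omega)
    obtain ⟨k, hk⟩ := exists_zero m h01 (by omega)
    have hjk : j ≠ k := fun hh => by rw [hh, hk] at hj; omega
    refine ⟨E0 - Ee j - Ee k, line2_self j k hjk, line2_Kdp j k, ?_⟩
    rw [line2_D, hDm j, hDm k, hj, hk, ← hd, h]; ring

lemma exists_line (D : Fin 8 → ℤ) (hDK : ip8 D Kdp = 0) (hDD : ip8 D D = -2) :
    ∃ L, ip8 L L = -1 ∧ ip8 L Kdp = -1 ∧ ip8 D L = 1 := by
  rcases le_or_gt 0 (D 0) with h0 | h0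
  · exact exists_line_pos D h0 hDK hDD
  · have h1 : ip8 (-D) Kdp = 0 := by rw [ip8_neg_left, hDK]; ring
    have h2 : ip8 (-D) (-D) = -2 := by rw [ip8_neg_left, ip8_neg_right, hDD]; ring
    have h3 : 0 ≤ (-D) 0 := by simp only [Pi.neg_apply]; omega
    obtain ⟨L, hLL, hLK, hDL⟩ := exists_line_pos (-D) h3 h1 h2
    rw [ip8_neg_left] at hDL
    have hDL' : ip8 D L = -1 := by omega
    refine ⟨L - D, ?_, ?_, ?_⟩
    · rw [ip8_sub_left, ip8_sub_right, ip8_sub_right, ip8_comm L D, hLL, hDL', hDD]; ring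
    · rw [ip8_sub_left, hLK, hDK]; ring
    · rw [ip8_sub_right, hDL', hDD]; ring

end DP2aux

open DP2aux in
/-- Every root of a degree-2 del Pezzo surface is a difference of two disjoint
lines. -/
theorem root_is_difference_of_disjoint_lines
    (D : Fin 8 → ℤ) (hDK : ip8 D Kdp = 0) (hDD : ip8 D D = -2) :
    ∃ L₁ L₂ : Fin 8 → ℤ,
      ip8 L₁ L₁ = -1 ∧ ip8 L₁ Kdp = -1 ∧
      ip8 L₂ L₂ = -1 ∧ ip8 L₂ Kdp = -1 ∧
      ip8 L₁ L₂ = 0 ∧ D = L₁ - L₂ := by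
  obtain ⟨L₂, hLL, hLK, hDL⟩ := exists_line D hDK hDD
  refine ⟨D + L₂, L₂, ?_, ?_, hLL, hLK, ?_, by abel⟩
  · rw [ip8_add_left, ip8_add_right, ip8_add_right, ip8_comm L₂ D, hDD, hDL, hLL]; ring
  · rw [ip8_add_left, hDK, hLK]; ring
  · rw [ip8_add_left, hDL, hLL]; ring
end

section
/- In the Picard lattice ℤ^8 of a degree-2 del Pezzo surface (basis e₀,…,e₇, form diag(1,−1,…,−1), K = −3e₀+e₁+⋯+e₇), for every root D (D·K = 0, D² = −2) the class D − 2K is ample in the numerical sense that (D−2K)² > 0 and (D−2K)·L > 0 for every line class L (L² = L·K = −1). -/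
set_option maxHeartbeats 1000000


lemma ip8_expand (x y : Fin 8 → ℤ) : ip8 x y = x 0 * y 0 -
    (x 1 * y 1 + x 2 * y 2 + x 3 * y 3 + x 4 * y 4 + x 5 * y 5 + x 6 * y 6 + x 7 * y 7) := by
  simp [ip8, Fin.sum_univ_seven, show Fin.succ 2 = (3:Fin 8) from rfl,
    show Fin.succ 3 = (4:Fin 8) from rfl, show Fin.succ 4 = (5:Fin 8) from rfl,
    show Fin.succ 5 = (6:Fin 8) from rfl, show Fin.succ 6 = (7:Fin 8) from rfl]

lemma ip8_K (x : Fin 8 → ℤ) : ip8 x Kdp =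
    -3 * x 0 - (x 1 + x 2 + x 3 + x 4 + x 5 + x 6 + x 7) := by
  rw [ip8_expand]; simp [Kdp]; ring

/-- Cauchy–Schwarz for 7 integers. -/
lemma cs7 (a b c d e f g : ℤ) :
    (a + b + c + d + e + f + g)^2 ≤ 7 * (a^2 + b^2 + c^2 + d^2 + e^2 + f^2 + g^2) := by
  nlinarith [sq_nonneg (a-b), sq_nonneg (a-c), sq_nonneg (a-d), sq_nonneg (a-e),
    sq_nonneg (a-f), sq_nonneg (a-g), sq_nonneg (b-c), sq_nonneg (b-d), sq_nonneg (b-e),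
    sq_nonneg (b-f), sq_nonneg (b-g), sq_nonneg (c-d), sq_nonneg (c-e), sq_nonneg (c-f),
    sq_nonneg (c-g), sq_nonneg (d-e), sq_nonneg (d-f), sq_nonneg (d-g), sq_nonneg (e-f),
    sq_nonneg (e-g), sq_nonneg (f-g)]

/-- Negative semidefiniteness of ip8 on K⊥. -/
lemma kperp_neg (x : Fin 8 → ℤ) (h : ip8 x Kdp = 0) :
    7 * ip8 x x ≤ -2 * (x 0)^2 := by
  rw [ip8_K] at h
  rw [ip8_expand]
  have hs : x 1 + x 2 + x 3 + x 4 + x 5 + x 6 + x 7 = -3 * x 0 := by linarith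
  have hcs := cs7 (x 1) (x 2) (x 3) (x 4) (x 5) (x 6) (x 7)
  rw [hs] at hcs
  nlinarith [hcs]

lemma sq_le_zero (y : ℤ) (h : y ^ 2 ≤ 0) : y = 0 :=
  (pow_eq_zero_iff two_ne_zero).mp (le_antisymm h (sq_nonneg y))

/-- Definiteness: ip8 is negative definite on K⊥. -/
lemma kperp_zero (x : Fin 8 → ℤ) (h : ip8 x Kdp = 0) (hz : ip8 x x = 0) :
    ∀ i : Fin 8, x i = 0 := by
  have hle := kperp_neg x h
  rw [hz] at hle
  have hx0 : x 0 = 0 := sq_le_zero _ (by linarith)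
  rw [ip8_expand] at hz
  have q : (x 1)*(x 1) + (x 2)*(x 2) + (x 3)*(x 3) + (x 4)*(x 4) + (x 5)*(x 5)
      + (x 6)*(x 6) + (x 7)*(x 7) = 0 := by nlinarith [hz, hx0]
  have e1 : x 1 = 0 := sq_le_zero _ (by nlinarith [sq_nonneg (x 2), sq_nonneg (x 3), sq_nonneg (x 4), sq_nonneg (x 5), sq_nonneg (x 6), sq_nonneg (x 7)])
  have e2 : x 2 = 0 := sq_le_zero _ (by nlinarith [sq_nonneg (x 1), sq_nonneg (x 3), sq_nonneg (x 4), sq_nonneg (x 5), sq_nonneg (x 6), sq_nonneg (x 7)])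
  have e3 : x 3 = 0 := sq_le_zero _ (by nlinarith [sq_nonneg (x 1), sq_nonneg (x 2), sq_nonneg (x 4), sq_nonneg (x 5), sq_nonneg (x 6), sq_nonneg (x 7)])
  have e4 : x 4 = 0 := sq_le_zero _ (by nlinarith [sq_nonneg (x 1), sq_nonneg (x 2), sq_nonneg (x 3), sq_nonneg (x 5), sq_nonneg (x 6), sq_nonneg (x 7)])
  have e5 : x 5 = 0 := sq_le_zero _ (by nlinarith [sq_nonneg (x 1), sq_nonneg (x 2), sq_nonneg (x 3), sq_nonneg (x 4), sq_nonneg (x 6), sq_nonneg (x 7)])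
  have e6 : x 6 = 0 := sq_le_zero _ (by nlinarith [sq_nonneg (x 1), sq_nonneg (x 2), sq_nonneg (x 3), sq_nonneg (x 4), sq_nonneg (x 5), sq_nonneg (x 7)])
  have e7 : x 7 = 0 := sq_le_zero _ (by nlinarith [sq_nonneg (x 1), sq_nonneg (x 2), sq_nonneg (x 3), sq_nonneg (x 4), sq_nonneg (x 5), sq_nonneg (x 6)])
  intro i
  fin_cases i <;> assumption

/-- For every root D of a degree-2 del Pezzo surface, D - 2K is numerically
ample: (D - 2K)² > 0 and (D - 2K)·L > 0 for every line class L. -/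
theorem root_minus_twice_canonical_is_ample
    (D : Fin 8 → ℤ) (hDK : ip8 D Kdp = 0) (hDD : ip8 D D = -2) :
    0 < ip8 (D - 2 • Kdp) (D - 2 • Kdp) ∧
    ∀ L : Fin 8 → ℤ, ip8 L L = -1 → ip8 L Kdp = -1 →
      0 < ip8 (D - 2 • Kdp) L := by
  have hE : ∀ i : Fin 8, (D - 2 • Kdp) i = D i - 2 * Kdp i := fun i => by
    simp [Pi.sub_apply, Pi.smul_apply, two_smul]; ring
  have hK0 : Kdp 0 = -3 := rfl
  have hK1 : Kdp 1 = 1 := rfl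
  have hK2 : Kdp 2 = 1 := rfl
  have hK3 : Kdp 3 = 1 := rfl
  have hK4 : Kdp 4 = 1 := rfl
  have hK5 : Kdp 5 = 1 := rfl
  have hK6 : Kdp 6 = 1 := rfl
  have hK7 : Kdp 7 = 1 := rfl
  have hDK' := hDK; rw [ip8_K] at hDK'
  have hDD' := hDD; rw [ip8_expand] at hDD'
  constructor
  · rw [ip8_expand]
    rw [hE 0, hE 1, hE 2, hE 3, hE 4, hE 5, hE 6, hE 7,
      hK0, hK1, hK2, hK3, hK4, hK5, hK6, hK7]
    nlinarith [hDK', hDD']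
  · intro L hLL hLK
    have hLL' := hLL; rw [ip8_expand] at hLL'
    have hLK' := hLK; rw [ip8_K] at hLK'
    -- x = D - 2L - K lies in K⊥
    have hxK : ip8 (fun i => D i - 2 * L i - Kdp i) Kdp = 0 := by
      rw [ip8_K]; simp only [hK0, hK1, hK2, hK3, hK4, hK5, hK6, hK7]; linarith
    have hsemi := kperp_neg _ hxK
    -- abbreviate d := D·L
    have hxx : ip8 (fun i => D i - 2 * L i - Kdp i) (fun i => D i - 2 * L i - Kdp i)
        = -8 - 4 * (D 0 * L 0 - (D 1 * L 1 + D 2 * L 2 + D 3 * L 3 + D 4 * L 4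
          + D 5 * L 5 + D 6 * L 6 + D 7 * L 7)) := by
      rw [ip8_expand]
      simp only [hK0, hK1, hK2, hK3, hK4, hK5, hK6, hK7]
      linear_combination hDD' + 4 * hLL' - 2 * hDK' + 4 * hLK'
    set d : ℤ := D 0 * L 0 - (D 1 * L 1 + D 2 * L 2 + D 3 * L 3 + D 4 * L 4
          + D 5 * L 5 + D 6 * L 6 + D 7 * L 7) with hd
    rw [hxx] at hsemi
    have hge : -2 ≤ d := by nlinarith [sq_nonneg (D 0 - 2 * L 0 + 3)]
    have hne : d ≠ -2 := by
      intro hdeq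
      have hxx0 : ip8 (fun i => D i - 2 * L i - Kdp i) (fun i => D i - 2 * L i - Kdp i) = 0 := by
        rw [hxx, hdeq]; ring
      have hz := kperp_zero _ hxK hxx0
      have hzi : ∀ i : Fin 8, D i = 2 * L i + Kdp i := fun i => by
        have := hz i; linarith
      rw [hzi 0, hzi 1, hzi 2, hzi 3, hzi 4, hzi 5, hzi 6, hzi 7,
        hK0, hK1, hK2, hK3, hK4, hK5, hK6, hK7] at hDD'
      nlinarith [hLL', hLK', hDD']
    have hd1 : -1 ≤ d := by omega
    rw [ip8_expand]
    rw [hE 0, hE 1, hE 2, hE 3, hE 4, hE 5, hE 6, hE 7,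
      hK0, hK1, hK2, hK3, hK4, hK5, hK6, hK7]
    have : D 0 * L 0 + 6 * L 0 - (D 1 * L 1 - 2 * L 1 + (D 2 * L 2 - 2 * L 2)
        + (D 3 * L 3 - 2 * L 3) + (D 4 * L 4 - 2 * L 4) + (D 5 * L 5 - 2 * L 5)
        + (D 6 * L 6 - 2 * L 6) + (D 7 * L 7 - 2 * L 7)) = d - 2 * ip8 L Kdp := by
      rw [ip8_K, hd]; ring
    nlinarith [hd1, hLK]
end

section
/- Let 𝒟 be a triangulated category with Serre functor S(E) = τE[2] where τ is an involutive autoequivalence, and let 𝒜 ⊂ 𝒟 be the heart of a bounded t-structure with τ(𝒜) = 𝒜. Then for all E, F ∈ 𝒜 and all i ∉ {0,1,2}, Hom(E, F[i]) = 0. -/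
/-- A τ-invariant heart 𝒜 in a triangulated category with Serre functor
S = τ ∘ [2] (τ an involution) has homological dimension 2: for E, F ∈ 𝒜,
Hom(E, F[i]) = 0 unless i ∈ {0,1,2}. Here `hom E F i` denotes the dimension of
Hom(E, F[i]); the heart property gives vanishing for i < 0, and Serre duality
gives hom E F i = hom F (τ E) (2 - i). -/
theorem tau_invariant_heart_homological_dimension_two
    {Obj : Type} (A : Set Obj) (τ : Obj → Obj) (hom : Obj → Obj → ℤ → ℕ)
    (hinv : ∀ E, τ (τ E) = E)
    (hτA : ∀ E ∈ A, τ E ∈ A)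
    (hheart : ∀ E ∈ A, ∀ F ∈ A, ∀ i : ℤ, i < 0 → hom E F i = 0)
    (hSerre : ∀ E F : Obj, ∀ i : ℤ, hom E F i = hom F (τ E) (2 - i)) :
    ∀ E ∈ A, ∀ F ∈ A, ∀ i : ℤ, i ∉ ({0, 1, 2} : Set ℤ) → hom E F i = 0 := by
  intro E hE F hF i hi
  simp only [Set.mem_insert_iff, Set.mem_singleton_iff] at hi
  push_neg at hi
  rcases lt_or_ge i 0 with h | h
  · exact hheart E hE F hF i h
  · have h2 : 2 - i < 0 := by omega
    rw [hSerre E F i]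
    exact hheart F hF (τ E) (hτA E hE) (2 - i) h2
end
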